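/- Harmony for basic evaluation: every closed, proper, clash-free ESC term either has a non-erasing basic redex or is an answer (a value that is not a variable, possibly under a list of cuts). -/

import Mathlib

/-- Variables of the ESC: multiplicative or exponential, indexed by names. -/
inductive EVar where
  | mul : ℕ → EVar
  | exp : ℕ → EVar
deriving DecidableEq

/-- Test for being a multiplicative variable. -/
def EVar.isMulB : EVar → Bool
  | EVar.mul _ => true
  | EVar.exp _ => false

/-- ESC terms: variables, abstractions `λx.t`, promotions `!t`,
cuts `[v→x]t`, subtractions `[m▷v,x]t`, derelictions `[e?x]t`. -/
inductive Term where
  | var : EVar → Term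
  | lam : EVar → Term → Term
  | bang : Term → Term
  | cut : Term → EVar → Term → Term
  | sub : EVar → Term → EVar → Term → Term
  | der : EVar → EVar → Term → Term
deriving DecidableEq

namespace Term

/-- Values: variables, abstractions, promotions. -/
def IsValue : Term → Prop
  | var _ => True
  | lam _ _ => True
  | bang _ => True
  | _ => False

/-- Free variables. -/
def fv : Term → Finset EVar
  | var x => {x}
  | lam x t => fv t \ {x}
  | bang t => fv t
  | cut v x t => fv v ∪ (fv t \ {x})
  | sub m v x t => insert m (fv v ∪ (fv t \ {x}))
  | der e x t => insert e (fv t \ {x})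

/-- Multiplicative free variables. -/
def mfv (t : Term) : Finset EVar := (fv t).filter (fun x => x.isMulB = true)

/-- Proper terms (linearity of multiplicative variables, exponential boundary
of promotions, and the grammar constraints on values and variable kinds). -/
def Proper : Term → Prop
  | var _ => True
  | lam x t => Proper t ∧ (x.isMulB = true → x ∈ mfv t)
  | bang t => Proper t ∧ mfv t = ∅
  | cut v x t => IsValue v ∧ Proper v ∧ Proper t ∧
      mfv v ∩ (mfv t \ {x}) = ∅ ∧ (x.isMulB = true → x ∈ mfv t)
  | sub m v x t => m.isMulB = true ∧ IsValue v ∧ Proper v ∧ Proper t ∧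
      mfv v ∩ (mfv t \ {x}) = ∅ ∧ m ∉ mfv t ∧ (x.isMulB = true → x ∈ mfv t)
  | der e x t => e.isMulB = false ∧ Proper t ∧ (x.isMulB = true → x ∈ mfv t)

end Term

/-- Multiplicative values: multiplicative variables and abstractions. -/
def IsMulVal : Term → Prop
  | Term.var (EVar.mul _) => True
  | Term.lam _ _ => True
  | _ => False

/-- Exponential values: exponential variables and promotions. -/
def IsExpVal : Term → Prop
  | Term.var (EVar.exp _) => True
  | Term.bang _ => True
  | _ => False

/-- A clash occurs somewhere in the term: a cut of a multiplicative value on an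
exponential variable, or of an exponential value on a multiplicative variable. -/
def HasClash : Term → Prop
  | Term.var _ => False
  | Term.lam _ t => HasClash t
  | Term.bang t => HasClash t
  | Term.cut v x t => (IsMulVal v ∧ x.isMulB = false) ∨ (IsExpVal v ∧ x.isMulB = true) ∨
      HasClash v ∨ HasClash t
  | Term.sub _ v _ t => HasClash v ∨ HasClash t
  | Term.der _ _ t => HasClash t

/-- Left constructors: a left context is a list of these. -/
inductive LIt where
  | cut : Term → EVar → LIt
  | sub : EVar → Term → EVar → LIt
  | der : EVar → EVar → LIt

/-- Plugging a term under a list of left constructors. -/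
def plugL : List LIt → Term → Term
  | [], t => t
  | LIt.cut v x :: L, t => Term.cut v x (plugL L t)
  | LIt.sub m v x :: L, t => Term.sub m v x (plugL L t)
  | LIt.der e x :: L, t => Term.der e x (plugL L t)

/-- One-hole contexts for ESC terms. -/
inductive Ctx where
  | hole : Ctx
  | lam : EVar → Ctx → Ctx
  | bang : Ctx → Ctx
  | cutT : Ctx → EVar → Term → Ctx
  | cutC : Term → EVar → Ctx → Ctx
  | subV : EVar → Ctx → EVar → Term → Ctx
  | subC : EVar → Term → EVar → Ctx → Ctx
  | der : EVar → EVar → Ctx → Ctx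

/-- Plugging a term in a context. -/
def plug : Ctx → Term → Term
  | Ctx.hole, s => s
  | Ctx.lam x C, s => Term.lam x (plug C s)
  | Ctx.bang C, s => Term.bang (plug C s)
  | Ctx.cutT C x t, s => Term.cut (plug C s) x t
  | Ctx.cutC v x C, s => Term.cut v x (plug C s)
  | Ctx.subV m C x t, s => Term.sub m (plug C s) x t
  | Ctx.subC m v x C, s => Term.sub m v x (plug C s)
  | Ctx.der e x C, s => Term.der e x (plug C s)

/-- Variables captured by a context (bound on the path to the hole). -/
def binds : Ctx → Finset EVar
  | Ctx.hole => ∅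
  | Ctx.lam x C => insert x (binds C)
  | Ctx.bang C => binds C
  | Ctx.cutT C _ _ => binds C
  | Ctx.cutC _ x C => insert x (binds C)
  | Ctx.subV _ C _ _ => binds C
  | Ctx.subC _ _ x C => insert x (binds C)
  | Ctx.der _ x C => insert x (binds C)

/-- Non-erasing root rules of the ESC (the acting cut is at the root;
the inner context does not capture the cut variable). -/
inductive RootNW : Term → Term → Prop
  | axm1 {v : Term} {n : ℕ} {C : Ctx} :
      IsMulVal v → EVar.mul n ∉ binds C →
      RootNW (Term.cut v (EVar.mul n) (plug C (Term.var (EVar.mul n)))) (plug C v)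
  | axm2 {n₂ n : ℕ} {C : Ctx} {v : Term} {x : EVar} {t : Term} :
      EVar.mul n ∉ binds C →
      RootNW (Term.cut (Term.var (EVar.mul n₂)) (EVar.mul n)
               (plug C (Term.sub (EVar.mul n) v x t)))
             (plug C (Term.sub (EVar.mul n₂) v x t))
  | lolli {y : EVar} {L : List LIt} {v' : Term} {n : ℕ} {C : Ctx}
      {v : Term} {x : EVar} {t : Term} :
      Term.IsValue v' → EVar.mul n ∉ binds C →
      RootNW (Term.cut (Term.lam y (plugL L v')) (EVar.mul n)
               (plug C (Term.sub (EVar.mul n) v x t)))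
             (plug C (Term.cut v y (plugL L (Term.cut v' x t))))
  | axe1 {v : Term} {n : ℕ} {C : Ctx} :
      IsExpVal v → EVar.exp n ∉ binds C →
      RootNW (Term.cut v (EVar.exp n) (plug C (Term.var (EVar.exp n))))
             (Term.cut v (EVar.exp n) (plug C v))
  | axe2 {n₂ n : ℕ} {C : Ctx} {x : EVar} {t : Term} :
      EVar.exp n ∉ binds C →
      RootNW (Term.cut (Term.var (EVar.exp n₂)) (EVar.exp n)
               (plug C (Term.der (EVar.exp n) x t)))
             (Term.cut (Term.var (EVar.exp n₂)) (EVar.exp n)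
               (plug C (Term.der (EVar.exp n₂) x t)))
  | bang {L : List LIt} {v : Term} {n : ℕ} {C : Ctx} {x : EVar} {t : Term} :
      Term.IsValue v → EVar.exp n ∉ binds C →
      RootNW (Term.cut (Term.bang (plugL L v)) (EVar.exp n)
               (plug C (Term.der (EVar.exp n) x t)))
             (Term.cut (Term.bang (plugL L v)) (EVar.exp n)
               (plug C (plugL L (Term.cut v x t))))

/-- The erasing (weakening) root rule. -/
inductive RootW : Term → Term → Prop
  | w {v : Term} {e : EVar} {t : Term} :
      IsExpVal v → e ∉ Term.fv t → RootW (Term.cut v e t) t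

/-- Full micro-step ESC reduction: contextual closure of all root rules. -/
def EscStep (t s : Term) : Prop :=
  ∃ (C : Ctx) (t' s' : Term), (RootNW t' s' ∨ RootW t' s') ∧
    t = plug C t' ∧ s = plug C s'

/-- Clash-freeness: no reduct (including the term itself) has a clash. -/
def ClashFree (t : Term) : Prop :=
  ∀ s, Relation.ReflTransGen EscStep t s → ¬ HasClash s

/-- Closure of a relation under cut contexts `E ::= ⟨·⟩ | [v→x]E`. -/
inductive CutClos (R : Term → Term → Prop) : Term → Term → Prop
  | root {t s : Term} : R t s → CutClos R t s
  | cut {v : Term} {x : EVar} {t s : Term} :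
      CutClos R t s → CutClos R (Term.cut v x t) (Term.cut v x s)

/-- Plugging a term under a list of cuts (a cut context). -/
def plugE : List (Term × EVar) → Term → Term
  | [], t => t
  | (v, x) :: E, t => Term.cut v x (plugE E t)

/-- Answers: a non-variable value under a cut context. -/
def IsAnswer (t : Term) : Prop :=
  ∃ (E : List (Term × EVar)) (v : Term),
    Term.IsValue v ∧ (∀ x, v ≠ Term.var x) ∧ t = plugE E v

/-! ### Auxiliary lemmas -/

/-- Turn a cut list into a one-hole context made of `cutC`. -/
def ctxE : List (Term × EVar) → Ctx
  | [] => Ctx.hole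
  | (v, x) :: E => Ctx.cutC v x (ctxE E)

lemma plug_ctxE : ∀ (E : List (Term × EVar)) (u : Term), plug (ctxE E) u = plugE E u := by
  intro E
  induction E with
  | nil => intro u; rfl
  | cons p E ih => intro u; obtain ⟨v, x⟩ := p; simp [ctxE, plug, plugE, ih]

lemma binds_ctxE {y : EVar} : ∀ (E : List (Term × EVar)),
    (∀ p ∈ E, p.2 ≠ y) → y ∉ binds (ctxE E) := by
  intro E
  induction E with
  | nil => intro _; simp [ctxE, binds]
  | cons p E ih =>
    intro h
    obtain ⟨v, x⟩ := p
    simp only [ctxE, binds, Finset.mem_insert]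
    push_neg
    refine ⟨?_, ih fun q hq => h q (List.mem_cons_of_mem _ hq)⟩
    intro hxy
    exact h (v, x) List.mem_cons_self (by simpa using hxy.symm)

lemma plugE_append : ∀ (E1 E2 : List (Term × EVar)) (u : Term),
    plugE (E1 ++ E2) u = plugE E1 (plugE E2 u) := by
  intro E1
  induction E1 with
  | nil => intro E2 u; rfl
  | cons p E ih => intro E2 u; obtain ⟨v, x⟩ := p; simp [plugE, ih]

lemma cutClos_plugE {R : Term → Term → Prop} {a b : Term} :
    ∀ (E : List (Term × EVar)), CutClos R a b → CutClos R (plugE E a) (plugE E b) := by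
  intro E
  induction E with
  | nil => exact fun h => h
  | cons p E ih => intro h; obtain ⟨v, x⟩ := p; exact CutClos.cut (ih h)

lemma hasClash_plugE {u : Term} : ∀ (E : List (Term × EVar)),
    HasClash u → HasClash (plugE E u) := by
  intro E
  induction E with
  | nil => exact fun h => h
  | cons p E ih =>
    intro h
    obtain ⟨v, x⟩ := p
    simp only [plugE, HasClash]
    exact Or.inr (Or.inr (Or.inr (ih h)))

lemma proper_plugE : ∀ (E : List (Term × EVar)) (u : Term),
    Term.Proper (plugE E u) → Term.Proper u ∧ ∀ p ∈ E, Term.IsValue p.1 := by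
  intro E
  induction E with
  | nil => intro u h; exact ⟨h, by simp⟩
  | cons p E ih =>
    intro u h
    obtain ⟨v, x⟩ := p
    simp only [plugE, Term.Proper] at h
    obtain ⟨hv, _, hrest, _⟩ := h
    obtain ⟨hu, hall⟩ := ih u hrest
    refine ⟨hu, ?_⟩
    intro q hq
    rcases List.mem_cons.1 hq with rfl | hq
    · exact hv
    · exact hall q hq

lemma mem_fv_plugE {y : EVar} : ∀ (E : List (Term × EVar)) (u : Term),
    y ∈ Term.fv u → y ∈ Term.fv (plugE E u) ∨ ∃ p ∈ E, p.2 = y := by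
  intro E
  induction E with
  | nil => intro u h; exact Or.inl h
  | cons p E ih =>
    intro u h
    obtain ⟨v, x⟩ := p
    rcases ih u h with hy | ⟨q, hq, hq2⟩
    · by_cases hxy : y = x
      · exact Or.inr ⟨(v, x), List.mem_cons_self, hxy.symm⟩
      · left
        simp only [plugE, Term.fv, Finset.mem_union, Finset.mem_sdiff, Finset.mem_singleton]
        exact Or.inr ⟨hy, hxy⟩
    · exact Or.inr ⟨q, List.mem_cons_of_mem _ hq, hq2⟩

/-- Every term decomposes as a list of left constructors over a value. -/
lemma exists_plugL : ∀ t : Term, ∃ (L : List LIt) (v : Term), Term.IsValue v ∧ t = plugL L v := by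
  intro t
  induction t with
  | var x => exact ⟨[], Term.var x, trivial, rfl⟩
  | lam x s _ => exact ⟨[], Term.lam x s, trivial, rfl⟩
  | bang s _ => exact ⟨[], Term.bang s, trivial, rfl⟩
  | cut v x s _ ihs =>
    obtain ⟨L, w, hw, rfl⟩ := ihs
    exact ⟨LIt.cut v x :: L, w, hw, rfl⟩
  | sub m v x s _ ihs =>
    obtain ⟨L, w, hw, rfl⟩ := ihs
    exact ⟨LIt.sub m v x :: L, w, hw, rfl⟩
  | der e x s ihs =>
    obtain ⟨L, w, hw, rfl⟩ := ihs
    exact ⟨LIt.der e x :: L, w, hw, rfl⟩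

/-- Every term decomposes as a cut spine over a non-cut term. -/
lemma exists_spine : ∀ t : Term, ∃ (E : List (Term × EVar)) (u : Term),
    (∀ v x s, u ≠ Term.cut v x s) ∧ t = plugE E u := by
  intro t
  induction t with
  | var x => exact ⟨[], Term.var x, fun v x' s h => Term.noConfusion h, rfl⟩
  | lam x s _ => exact ⟨[], Term.lam x s, fun v x' s' h => Term.noConfusion h, rfl⟩
  | bang s _ => exact ⟨[], Term.bang s, fun v x' s' h => Term.noConfusion h, rfl⟩
  | cut v x s _ ihs =>
    obtain ⟨E, u, hu, rfl⟩ := ihs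
    exact ⟨(v, x) :: E, u, hu, rfl⟩
  | sub m v x s _ _ => exact ⟨[], Term.sub m v x s, fun v' x' s' h => Term.noConfusion h, rfl⟩
  | der e x s _ => exact ⟨[], Term.der e x s, fun v' x' s' h => Term.noConfusion h, rfl⟩

/-- Last occurrence in a list satisfying a predicate. -/
lemma last_occ {α : Type*} (P : α → Prop) : ∀ l : List α, (∃ p ∈ l, P p) →
    ∃ l1 a l2, l = l1 ++ a :: l2 ∧ P a ∧ ∀ b ∈ l2, ¬ P b := by
  intro l
  induction l with
  | nil => simp
  | cons a l ih =>
    intro h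
    by_cases h' : ∃ p ∈ l, P p
    · obtain ⟨l1, b, l2, rfl, hb, hl2⟩ := ih h'
      exact ⟨a :: l1, b, l2, rfl, hb, hl2⟩
    · have ha : P a := by
        rcases h with ⟨p, hp, hP⟩
        rcases List.mem_cons.1 hp with rfl | hp
        · exact hP
        · exact absurd ⟨p, hp, hP⟩ h'
      exact ⟨[], a, l, rfl, ha, fun b hb hP => h' ⟨b, hb, hP⟩⟩

lemma step_of_root {E1 E2 : List (Term × EVar)} {u v : Term} {y : EVar} {b : Term}
    (hr : RootNW (Term.cut v y (plugE E2 u)) b) :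
    ∃ s, CutClos RootNW (plugE (E1 ++ (v, y) :: E2) u) s := by
  refine ⟨plugE E1 b, ?_⟩
  rw [plugE_append]
  exact cutClos_plugE E1 (CutClos.root hr)

lemma clash_at {E1 E2 : List (Term × EVar)} {u v : Term} {y : EVar}
    (h : (IsMulVal v ∧ y.isMulB = false) ∨ (IsExpVal v ∧ y.isMulB = true)) :
    HasClash (plugE (E1 ++ (v, y) :: E2) u) := by
  rw [plugE_append]
  apply hasClash_plugE
  simp only [plugE, HasClash]
  tauto

/-- Harmony for basic evaluation: every closed, proper, clash-free term either
has a non-erasing basic redex or is an answer. -/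
theorem basic_harmony (t : Term)
    (hclosed : Term.fv t = ∅) (hproper : Term.Proper t) (hcf : ClashFree t) :
    (∃ s, CutClos RootNW t s) ∨ IsAnswer t := by
  obtain ⟨E, u, hnc, rfl⟩ := exists_spine t
  have hclash : ¬ HasClash (plugE E u) := hcf _ Relation.ReflTransGen.refl
  obtain ⟨hpu, hvals⟩ := proper_plugE E u hproper
  -- a helper to find the rightmost binder of a variable free in u
  have find : ∀ y : EVar, y ∈ Term.fv u → ∃ (E1 E2 : List (Term × EVar)) (v : Term),
      E = E1 ++ (v, y) :: E2 ∧ Term.IsValue v ∧ y ∉ binds (ctxE E2) := by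
    intro y hy
    rcases mem_fv_plugE E u hy with hmem | hex
    · rw [hclosed] at hmem; exact absurd hmem (Finset.notMem_empty y)
    · obtain ⟨E1, p, E2, hE, hp, hlast⟩ := last_occ (fun p => p.2 = y) E hex
      obtain ⟨v, y'⟩ := p
      cases hp
      refine ⟨E1, E2, v, hE, ?_, binds_ctxE E2 hlast⟩
      exact hvals (v, y') (by rw [hE]; simp)
  cases u with
  | var y =>
    obtain ⟨E1, E2, v, rfl, hvv, hnb⟩ := find y (by simp [Term.fv])
    left
    cases y with
    | mul n =>
      -- v must be a multiplicative value, else clash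
      cases v with
      | var z =>
        cases z with
        | mul n₂ =>
          have hr := RootNW.axm1 (v := Term.var (EVar.mul n₂)) (n := n) (C := ctxE E2)
            trivial hnb
          simp only [plug_ctxE] at hr
          exact step_of_root hr
        | exp n₂ =>
          exact (hclash (clash_at (Or.inr ⟨trivial, rfl⟩))).elim
      | lam z b =>
        have hr := RootNW.axm1 (v := Term.lam z b) (n := n) (C := ctxE E2) trivial hnb
        simp only [plug_ctxE] at hr
        exact step_of_root hr
      | bang b =>
        exact (hclash (clash_at (Or.inr ⟨trivial, rfl⟩))).elim
      | cut _ _ _ => simp [Term.IsValue] at hvv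
      | sub _ _ _ _ => simp [Term.IsValue] at hvv
      | der _ _ _ => simp [Term.IsValue] at hvv
    | exp n =>
      cases v with
      | var z =>
        cases z with
        | mul n₂ =>
          exact (hclash (clash_at (Or.inl ⟨trivial, rfl⟩))).elim
        | exp n₂ =>
          have hr := RootNW.axe1 (v := Term.var (EVar.exp n₂)) (n := n) (C := ctxE E2)
            trivial hnb
          simp only [plug_ctxE] at hr
          exact step_of_root hr
      | lam z b =>
        exact (hclash (clash_at (Or.inl ⟨trivial, rfl⟩))).elim
      | bang b =>
        have hr := RootNW.axe1 (v := Term.bang b) (n := n) (C := ctxE E2) trivial hnb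
        simp only [plug_ctxE] at hr
        exact step_of_root hr
      | cut _ _ _ => simp [Term.IsValue] at hvv
      | sub _ _ _ _ => simp [Term.IsValue] at hvv
      | der _ _ _ => simp [Term.IsValue] at hvv
  | lam x s =>
    exact Or.inr ⟨E, Term.lam x s, trivial, fun x' h => Term.noConfusion h, rfl⟩
  | bang s =>
    exact Or.inr ⟨E, Term.bang s, trivial, fun x' h => Term.noConfusion h, rfl⟩
  | cut v x s => exact absurd rfl (hnc v x s)
  | sub m v0 x s =>
    simp only [Term.Proper] at hpu
    obtain ⟨hm, _⟩ := hpu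
    obtain ⟨n, rfl⟩ : ∃ n, m = EVar.mul n := by
      cases m with
      | mul n => exact ⟨n, rfl⟩
      | exp n => simp [EVar.isMulB] at hm
    obtain ⟨E1, E2, v, rfl, hvv, hnb⟩ :=
      find (EVar.mul n) (by simp [Term.fv])
    left
    cases v with
    | var z =>
      cases z with
      | mul n₂ =>
        have hr := RootNW.axm2 (n₂ := n₂) (n := n) (C := ctxE E2) (v := v0) (x := x)
          (t := s) hnb
        simp only [plug_ctxE] at hr
        exact step_of_root hr
      | exp n₂ =>
        exact (hclash (clash_at (Or.inr ⟨trivial, rfl⟩))).elim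
    | lam z body =>
      obtain ⟨L, v', hv', hbody⟩ := exists_plugL body
      have hr := RootNW.lolli (y := z) (L := L) (v' := v') (n := n) (C := ctxE E2)
        (v := v0) (x := x) (t := s) hv' hnb
      simp only [plug_ctxE] at hr
      rw [← hbody] at hr
      exact step_of_root hr
    | bang b =>
      exact (hclash (clash_at (Or.inr ⟨trivial, rfl⟩))).elim
    | cut _ _ _ => simp [Term.IsValue] at hvv
    | sub _ _ _ _ => simp [Term.IsValue] at hvv
    | der _ _ _ => simp [Term.IsValue] at hvv
  | der e x s =>
    simp only [Term.Proper] at hpu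
    obtain ⟨he, _⟩ := hpu
    obtain ⟨n, rfl⟩ : ∃ n, e = EVar.exp n := by
      cases e with
      | mul n => simp [EVar.isMulB] at he
      | exp n => exact ⟨n, rfl⟩
    obtain ⟨E1, E2, v, rfl, hvv, hnb⟩ :=
      find (EVar.exp n) (by simp [Term.fv])
    left
    cases v with
    | var z =>
      cases z with
      | mul n₂ =>
        exact (hclash (clash_at (Or.inl ⟨trivial, rfl⟩))).elim
      | exp n₂ =>
        have hr := RootNW.axe2 (n₂ := n₂) (n := n) (C := ctxE E2) (x := x) (t := s) hnb
        simp only [plug_ctxE] at hr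
        exact step_of_root hr
    | lam z b =>
      exact (hclash (clash_at (Or.inl ⟨trivial, rfl⟩))).elim
    | bang b =>
      obtain ⟨L, v', hv', hb⟩ := exists_plugL b
      have hr := RootNW.bang (L := L) (v := v') (n := n) (C := ctxE E2) (x := x)
        (t := s) hv' hnb
      simp only [plug_ctxE] at hr
      rw [← hb] at hr
      exact step_of_root hr
    | cut _ _ _ => simp [Term.IsValue] at hvv
    | sub _ _ _ _ => simp [Term.IsValue] at hvv
    | der _ _ _ => simp [Term.IsValue] at hvv
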